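/- Let h be a symmetric bilinear form on an n-dimensional inner product space. Then F_h(ω^k) = k·ω^{k-1}·F_h(ω) for any symmetric (p,p)-double form ω and any positive integer k, where powers are taken in the ring of double forms. -/

import Mathlib

open scoped BigOperators
open scoped Classical

noncomputable section

/-- A `(p,q)`-double form on `ℝⁿ`, given by its components with respect to the
standard orthonormal basis: a scalar-valued function of a row multi-index and a
column multi-index. -/
def DForm (n p q : ℕ) : Type := (Fin p → Fin n) → (Fin q → Fin n) → ℝ

namespace DForm

variable {n : ℕ}

/-- Transport a double form along equalities of the bidegrees. -/
def cast' {p q p' q' : ℕ} (hp : p = p') (hq : q = q') (ω : DForm n p q) :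
    DForm n p' q' :=
  fun I J => ω (fun a => I (Fin.cast hp a)) (fun b => J (Fin.cast hq b))

/-- A double form is alternating in each of its two blocks of arguments. -/
def IsAlt {p q : ℕ} (ω : DForm n p q) : Prop :=
  (∀ (σ : Equiv.Perm (Fin p)) (I : Fin p → Fin n) (J : Fin q → Fin n),
      ω (I ∘ σ) J = ((Equiv.Perm.sign σ : ℤ) : ℝ) * ω I J) ∧
  (∀ (τ : Equiv.Perm (Fin q)) (I : Fin p → Fin n) (J : Fin q → Fin n),
      ω I (J ∘ τ) = ((Equiv.Perm.sign τ : ℤ) : ℝ) * ω I J) ∧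
  (∀ (I : Fin p → Fin n) (J : Fin q → Fin n),
      (¬ Function.Injective I ∨ ¬ Function.Injective J) → ω I J = 0)

/-- A `(p,p)`-double form is symmetric. -/
def IsSym {p : ℕ} (ω : DForm n p p) : Prop := ∀ I J, ω I J = ω J I

/-- The exterior (Kulkarni–Nomizu type) product of double forms:
`(α₁⊗β₁)·(α₂⊗β₂) = (α₁∧α₂)⊗(β₁∧β₂)` in components. -/
def mul {p q r s : ℕ} (ω : DForm n p q) (θ : DForm n r s) :
    DForm n (p + r) (q + s) :=
  fun I J =>
    (((p.factorial * r.factorial * q.factorial * s.factorial : ℕ) : ℝ))⁻¹ *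
      ∑ σ : Equiv.Perm (Fin (p + r)), ∑ τ : Equiv.Perm (Fin (q + s)),
        ((Equiv.Perm.sign σ : ℤ) : ℝ) * ((Equiv.Perm.sign τ : ℤ) : ℝ) *
          ω (fun a => I (σ (Fin.castAdd r a))) (fun b => J (τ (Fin.castAdd s b))) *
          θ (fun a => I (σ (Fin.natAdd p a))) (fun b => J (τ (Fin.natAdd q b)))

/-- The contraction map `c : D^{p+1,q+1} → D^{p,q}` (trace over the orthonormal
basis in the first slot of each block). -/
def contr {p q : ℕ} (ω : DForm n (p + 1) (q + 1)) : DForm n p q :=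
  fun I J => ∑ i : Fin n, ω (Fin.cons i I) (Fin.cons i J)

/-- Total version of the contraction (zero when a bidegree is `0`). -/
def contr' : {p q : ℕ} → DForm n p q → DForm n (p - 1) (q - 1)
  | _ + 1, _ + 1, ω => contr ω
  | 0, _, _ => fun _ _ => 0
  | _ + 1, 0, _ => fun _ _ => 0

/-- Iterated contraction `c^k : D^{p+k,q+k} → D^{p,q}`. -/
def cIter {p q : ℕ} : (k : ℕ) → DForm n (p + k) (q + k) → DForm n p q
  | 0, ω => ω
  | k + 1, ω => cIter k (contr ω)

/-- The full contraction `c^p` of a `(p,p)`-double form, a scalar. -/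
def fullc {p : ℕ} (ω : DForm n p p) : ℝ :=
  cIter (p := 0) (q := 0) p
    (cast' (Nat.zero_add p).symm (Nat.zero_add p).symm ω) Fin.elim0 Fin.elim0

/-- The metric of `ℝⁿ` as a `(1,1)`-double form. -/
def gd : DForm n 1 1 := fun I J => if I 0 = J 0 then 1 else 0

/-- Powers `g^p` of the metric in the ring of double forms. -/
def gpow : (p : ℕ) → DForm n p p
  | 0 => fun _ _ => 1
  | p + 1 => mul (gpow p) gd

/-- Powers `ω^k` of a `(p,p)`-double form in the ring of double forms. -/
def pow {p : ℕ} (ω : DForm n p p) : (k : ℕ) → DForm n (p * k) (p * k)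
  | 0 => fun _ _ => 1
  | k + 1 => mul (pow ω k) ω

/-- The natural pointwise inner product on `(p,q)`-double forms. -/
def innerPQ {p q : ℕ} (ω θ : DForm n p q) : ℝ :=
  (((p.factorial * q.factorial : ℕ) : ℝ))⁻¹ *
    ∑ I : Fin p → Fin n, ∑ J : Fin q → Fin n, ω I J * θ I J

/-- The sign of the permutation of `{1,…,n}` obtained by concatenating the
multi-indices `K` and `I` (zero if it is not a permutation). -/
def epsSign {p : ℕ} (hp : p ≤ n) (K : Fin p → Fin n) (I : Fin (n - p) → Fin n) : ℝ :=
  if h : Function.Bijective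
      (fun a : Fin n => Fin.append K I (Fin.cast (by omega) a)) then
    ((Equiv.Perm.sign (Equiv.ofBijective _ h) : ℤ) : ℝ)
  else 0

/-- The generalized Hodge star operator on double forms, acting as the usual
Hodge star on each factor. -/
def hstar {p q : ℕ} (hp : p ≤ n) (hq : q ≤ n) (ω : DForm n p q) :
    DForm n (n - p) (n - q) :=
  fun I J =>
    (((p.factorial * q.factorial : ℕ) : ℝ))⁻¹ *
      ∑ K : Fin p → Fin n, ∑ L : Fin q → Fin n,
        epsSign hp K I * epsSign hq L J * ω K L

/-- The operator `F_h` associated with a symmetric bilinear form `h`: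
in an orthonormal basis diagonalizing `h` it multiplies the `(I,J)` component by
the sum of the eigenvalues of `h` over the indices in `I` and `J`.
Coordinate-free version: insert the endomorphism of `h` in each slot. -/
def Fh {p q : ℕ} (h : Fin n → Fin n → ℝ) (ω : DForm n p q) : DForm n p q :=
  fun I J =>
    (∑ k : Fin p, ∑ i : Fin n, h (I k) i * ω (Function.update I k i) J) +
    (∑ k : Fin q, ∑ i : Fin n, h (J k) i * ω I (Function.update J k i))

/-- A bilinear form on `ℝⁿ` viewed as a `(1,1)`-double form. -/
def ofBilin (h : Fin n → Fin n → ℝ) : DForm n 1 1 := fun I J => h (I 0) (J 0)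

/-- The first Bianchi identity for a `(2,2)`-double form. -/
def Bianchi1 (R : DForm n 2 2) : Prop :=
  ∀ x y z u : Fin n,
    R ![x, y] ![z, u] + R ![y, z] ![x, u] + R ![z, x] ![y, u] = 0

end DForm

end

section Aux

open Equiv

variable {n : ℕ}

/-- Real-valued sign of a permutation. -/
private def sg {m : ℕ} (σ : Equiv.Perm (Fin m)) : ℝ := ((Equiv.Perm.sign σ : ℤ) : ℝ)

private lemma sg_mul {m : ℕ} (σ τ : Equiv.Perm (Fin m)) : sg (σ * τ) = sg σ * sg τ := by
  simp [sg, map_mul]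

private lemma upd_comp {κ ι : Type*} [DecidableEq κ] [DecidableEq ι] (I : ι → Fin n) {f : κ → ι}
    (hf : Function.Injective f) (a : κ) (i : Fin n) :
    (fun x => Function.update I (f a) i (f x)) = Function.update (fun x => I (f x)) a i :=
  Function.update_comp_eq_of_injective I hf a i

private lemma upd_comp_ne {κ ι : Type*} [DecidableEq ι] (I : ι → Fin n) {f : κ → ι} {m : ι}
    (hm : ∀ x, f x ≠ m) (i : Fin n) :
    (fun x => Function.update I m i (f x)) = fun x => I (f x) :=
  Function.update_comp_eq_of_forall_ne I i hm

private lemma key_split {p r : ℕ} (h : Fin n → Fin n → ℝ) (σ : Equiv.Perm (Fin (p + r)))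
    (I : Fin (p + r) → Fin n)
    (A : (Fin p → Fin n) → ℝ) (B : (Fin r → Fin n) → ℝ) :
    ∑ m : Fin (p + r), ∑ i : Fin n, h (I m) i *
        (A (fun a => Function.update I m i (σ (Fin.castAdd r a))) *
          B (fun a => Function.update I m i (σ (Fin.natAdd p a))))
      = (∑ a : Fin p, ∑ i : Fin n, h (I (σ (Fin.castAdd r a))) i *
          (A (Function.update (fun x => I (σ (Fin.castAdd r x))) a i) *
            B (fun x => I (σ (Fin.natAdd p x))))) +
        (∑ a : Fin r, ∑ i : Fin n, h (I (σ (Fin.natAdd p a))) i *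
          (A (fun x => I (σ (Fin.castAdd r x))) *
            B (Function.update (fun x => I (σ (Fin.natAdd p x))) a i))) := by
  classical
  have hre := (Equiv.sum_comp σ (fun m => ∑ i : Fin n, h (I m) i *
      (A (fun a => Function.update I m i (σ (Fin.castAdd r a))) *
        B (fun a => Function.update I m i (σ (Fin.natAdd p a)))))).symm
  rw [hre, Fin.sum_univ_add]
  congr 1
  · refine Finset.sum_congr rfl fun a _ => Finset.sum_congr rfl fun i _ => ?_
    have hinj : Function.Injective (fun x : Fin p => σ (Fin.castAdd r x)) := by
      intro x y hxy
      have := σ.injective hxy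
      exact Fin.castAdd_injective p r this
    have e1 : (fun x => Function.update I (σ (Fin.castAdd r a)) i (σ (Fin.castAdd r x)))
        = Function.update (fun x => I (σ (Fin.castAdd r x))) a i := upd_comp I hinj a i
    have e2 : (fun x => Function.update I (σ (Fin.castAdd r a)) i (σ (Fin.natAdd p x)))
        = fun x => I (σ (Fin.natAdd p x)) := by
      refine upd_comp_ne I (fun x hx => ?_) i
      have := σ.injective hx
      have h1 : p + (x:ℕ) = (a:ℕ) := by
        have := congrArg Fin.val this
        simpa using this
      omega
    rw [e1, e2]
  · refine Finset.sum_congr rfl fun a _ => Finset.sum_congr rfl fun i _ => ?_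
    have hinj : Function.Injective (fun x : Fin r => σ (Fin.natAdd p x)) := by
      intro x y hxy
      have := σ.injective hxy
      simpa [Fin.ext_iff] using this
    have e1 : (fun x => Function.update I (σ (Fin.natAdd p a)) i (σ (Fin.castAdd r x)))
        = fun x => I (σ (Fin.castAdd r x)) := by
      refine upd_comp_ne I (fun x hx => ?_) i
      have := σ.injective hx
      have h1 : (x:ℕ) = p + (a:ℕ) := by
        have := congrArg Fin.val this
        simpa using this
      have := x.isLt
      omega
    have e2 : (fun x => Function.update I (σ (Fin.natAdd p a)) i (σ (Fin.natAdd p x)))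
        = Function.update (fun x => I (σ (Fin.natAdd p x))) a i := upd_comp I hinj a i
    rw [e1, e2]


private lemma pull2 {M N K K' : Type*} [Fintype M] [Fintype N] [Fintype K] [Fintype K']
    (c : ℝ) (w : K → K' → ℝ) (f : K → K' → M → N → ℝ) :
    ∑ k : K, ∑ k' : K', w k k' * (c * ∑ σ : M, ∑ τ : N, f k k' σ τ)
      = c * ∑ σ : M, ∑ τ : N, ∑ k : K, ∑ k' : K', w k k' * f k k' σ τ := by
  calc ∑ k : K, ∑ k' : K', w k k' * (c * ∑ σ : M, ∑ τ : N, f k k' σ τ)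
      = ∑ k : K, ∑ k' : K', ∑ σ : M, ∑ τ : N, c * (w k k' * f k k' σ τ) := by
        refine Finset.sum_congr rfl fun k _ => Finset.sum_congr rfl fun k' _ => ?_
        simp only [Finset.mul_sum]
        exact Finset.sum_congr rfl fun σ _ => Finset.sum_congr rfl fun τ _ => by ring
    _ = ∑ k : K, ∑ σ : M, ∑ k' : K', ∑ τ : N, c * (w k k' * f k k' σ τ) :=
        Finset.sum_congr rfl fun k _ => Finset.sum_comm
    _ = ∑ k : K, ∑ σ : M, ∑ τ : N, ∑ k' : K', c * (w k k' * f k k' σ τ) :=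
        Finset.sum_congr rfl fun k _ => Finset.sum_congr rfl fun σ _ => Finset.sum_comm
    _ = ∑ σ : M, ∑ k : K, ∑ τ : N, ∑ k' : K', c * (w k k' * f k k' σ τ) := Finset.sum_comm
    _ = ∑ σ : M, ∑ τ : N, ∑ k : K, ∑ k' : K', c * (w k k' * f k k' σ τ) :=
        Finset.sum_congr rfl fun σ _ => Finset.sum_comm
    _ = c * ∑ σ : M, ∑ τ : N, ∑ k : K, ∑ k' : K', w k k' * f k k' σ τ := by
        simp only [Finset.mul_sum]


private lemma pull_sign {K K' : Type*} [Fintype K] [Fintype K'] (d : ℝ) (w f g : K → K' → ℝ) :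
    ∑ k : K, ∑ k' : K', w k k' * ((d * f k k') * g k k')
      = d * ∑ k : K, ∑ k' : K', w k k' * (f k k' * g k k') := by
  rw [Finset.mul_sum]
  refine Finset.sum_congr rfl fun k _ => ?_
  rw [Finset.mul_sum]
  exact Finset.sum_congr rfl fun k' _ => by ring

private lemma sum_mul_in {K K' : Type*} [Fintype K] [Fintype K'] (g : ℝ) (w f : K → K' → ℝ) :
    (∑ k : K, ∑ k' : K', w k k' * f k k') * g
      = ∑ k : K, ∑ k' : K', w k k' * (f k k' * g) := by
  rw [Finset.sum_mul]
  refine Finset.sum_congr rfl fun k _ => ?_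
  rw [Finset.sum_mul]
  exact Finset.sum_congr rfl fun k' _ => by ring

private lemma mul_sum_in {K K' : Type*} [Fintype K] [Fintype K'] (g : ℝ) (w f : K → K' → ℝ) :
    g * (∑ k : K, ∑ k' : K', w k k' * f k k')
      = ∑ k : K, ∑ k' : K', w k k' * (g * f k k') := by
  rw [Finset.mul_sum]
  refine Finset.sum_congr rfl fun k _ => ?_
  rw [Finset.mul_sum]
  exact Finset.sum_congr rfl fun k' _ => by ring

private lemma Fh_mul {p q r s : ℕ} (h : Fin n → Fin n → ℝ)
    (α : DForm n p q) (β : DForm n r s)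
    (I : Fin (p + r) → Fin n) (J : Fin (q + s) → Fin n) :
    DForm.Fh h (DForm.mul α β) I J =
      DForm.mul (DForm.Fh h α) β I J + DForm.mul α (DForm.Fh h β) I J := by
  simp only [DForm.Fh, DForm.mul]
  rw [pull2, pull2, ← mul_add, ← mul_add]
  congr 1
  simp only [← Finset.sum_add_distrib]
  refine Finset.sum_congr rfl fun σ _ => Finset.sum_congr rfl fun τ _ => ?_
  have hk1 := key_split h σ I (fun v => α v (fun b => J (τ (Fin.castAdd s b))))
      (fun v => β v (fun b => J (τ (Fin.natAdd q b))))
  have hk2 := key_split h τ J (fun v => α (fun a => I (σ (Fin.castAdd r a))) v)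
      (fun v => β (fun a => I (σ (Fin.natAdd p a))) v)
  beta_reduce at hk1 hk2
  rw [pull_sign, pull_sign, hk1, hk2]
  rw [← sum_mul_in, ← sum_mul_in, ← mul_sum_in, ← mul_sum_in]
  ring

private lemma pull4 {M N M' N' : Type*} [Fintype M] [Fintype N] [Fintype M'] [Fintype N']
    (c : ℝ) (u : M → ℝ) (v : N → ℝ) (C : M → N → ℝ) (f : M → N → M' → N' → ℝ) :
    ∑ σ : M, ∑ τ : N, u σ * v τ * (c * ∑ σ' : M', ∑ τ' : N', f σ τ σ' τ') * C σ τ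
      = c * ∑ σ' : M', ∑ τ' : N', ∑ σ : M, ∑ τ : N, u σ * v τ * f σ τ σ' τ' * C σ τ := by
  calc ∑ σ : M, ∑ τ : N, u σ * v τ * (c * ∑ σ' : M', ∑ τ' : N', f σ τ σ' τ') * C σ τ
      = ∑ σ : M, ∑ τ : N, ∑ σ' : M', ∑ τ' : N', c * (u σ * v τ * f σ τ σ' τ' * C σ τ) := by
        refine Finset.sum_congr rfl fun σ _ => Finset.sum_congr rfl fun τ _ => ?_
        simp only [Finset.mul_sum, Finset.sum_mul]
        exact Finset.sum_congr rfl fun σ' _ => Finset.sum_congr rfl fun τ' _ => by ring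
    _ = ∑ σ : M, ∑ σ' : M', ∑ τ : N, ∑ τ' : N', c * (u σ * v τ * f σ τ σ' τ' * C σ τ) :=
        Finset.sum_congr rfl fun σ _ => Finset.sum_comm
    _ = ∑ σ : M, ∑ σ' : M', ∑ τ' : N', ∑ τ : N, c * (u σ * v τ * f σ τ σ' τ' * C σ τ) :=
        Finset.sum_congr rfl fun σ _ => Finset.sum_congr rfl fun σ' _ => Finset.sum_comm
    _ = ∑ σ' : M', ∑ σ : M, ∑ τ' : N', ∑ τ : N, c * (u σ * v τ * f σ τ σ' τ' * C σ τ) :=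
        Finset.sum_comm
    _ = ∑ σ' : M', ∑ τ' : N', ∑ σ : M, ∑ τ : N, c * (u σ * v τ * f σ τ σ' τ' * C σ τ) :=
        Finset.sum_congr rfl fun σ' _ => Finset.sum_comm
    _ = c * ∑ σ' : M', ∑ τ' : N', ∑ σ : M, ∑ τ : N, u σ * v τ * f σ τ σ' τ' * C σ τ := by
        simp only [Finset.mul_sum]

/-- Extension of a permutation of `Fin m` to `Fin (m+k)` fixing the last block. -/
private def emb (m k : ℕ) (σ : Equiv.Perm (Fin m)) : Equiv.Perm (Fin (m + k)) :=
  finSumFinEquiv.permCongr (σ.sumCongr (Equiv.refl (Fin k)))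

private lemma emb_castAdd (m k : ℕ) (σ : Equiv.Perm (Fin m)) (x : Fin m) :
    emb m k σ (Fin.castAdd k x) = Fin.castAdd k (σ x) := by
  simp [emb, Equiv.permCongr_apply]

private lemma emb_natAdd (m k : ℕ) (σ : Equiv.Perm (Fin m)) (x : Fin k) :
    emb m k σ (Fin.natAdd m x) = Fin.natAdd m x := by
  simp [emb, Equiv.permCongr_apply]

private lemma sign_emb (m k : ℕ) (σ : Equiv.Perm (Fin m)) :
    Equiv.Perm.sign (emb m k σ) = Equiv.Perm.sign σ := by
  simp [emb, Equiv.Perm.sign_permCongr, Equiv.Perm.sign_sumCongr]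

private lemma sum_mul_right {G H : Type*} [Group G] [Group H] [Fintype G] [Fintype H]
    (g : G) (h : H) (f : G → H → ℝ) :
    ∑ σ : G, ∑ τ : H, f (σ * g) (τ * h) = ∑ σ : G, ∑ τ : H, f σ τ :=
  calc ∑ σ : G, ∑ τ : H, f (σ * g) (τ * h)
      = ∑ σ : G, ∑ τ : H, f (σ * g) τ :=
        Finset.sum_congr rfl fun σ _ => Equiv.sum_comp (Equiv.mulRight h) (f (σ * g))
    _ = ∑ σ : G, ∑ τ : H, f σ τ :=
        Equiv.sum_comp (Equiv.mulRight g) (fun σ => ∑ τ : H, f σ τ)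

set_option maxHeartbeats 1000000 in
private lemma mul_mul_expand {p₁ q₁ p₂ q₂ p₃ q₃ : ℕ}
    (A : DForm n p₁ q₁) (B : DForm n p₂ q₂) (C : DForm n p₃ q₃)
    (I : Fin ((p₁ + p₂) + p₃) → Fin n) (J : Fin ((q₁ + q₂) + q₃) → Fin n) :
    DForm.mul (DForm.mul A B) C I J =
      (((p₁.factorial * p₂.factorial * p₃.factorial * q₁.factorial * q₂.factorial *
          q₃.factorial : ℕ) : ℝ))⁻¹ *
      ∑ ρ : Equiv.Perm (Fin ((p₁ + p₂) + p₃)), ∑ π : Equiv.Perm (Fin ((q₁ + q₂) + q₃)),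
        ((Equiv.Perm.sign ρ : ℤ) : ℝ) * ((Equiv.Perm.sign π : ℤ) : ℝ) *
          (A (fun a => I (ρ (Fin.castAdd p₃ (Fin.castAdd p₂ a))))
              (fun b => J (π (Fin.castAdd q₃ (Fin.castAdd q₂ b)))) *
            (B (fun a => I (ρ (Fin.castAdd p₃ (Fin.natAdd p₁ a))))
                (fun b => J (π (Fin.castAdd q₃ (Fin.natAdd q₁ b)))) *
              C (fun a => I (ρ (Fin.natAdd (p₁ + p₂) a)))
                (fun b => J (π (Fin.natAdd (q₁ + q₂) b))))) := by
  simp only [DForm.mul]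
  rw [pull4]
  have inner : ∀ (σ' : Equiv.Perm (Fin (p₁ + p₂))) (τ' : Equiv.Perm (Fin (q₁ + q₂))),
      (∑ σ : Equiv.Perm (Fin (p₁ + p₂ + p₃)), ∑ τ : Equiv.Perm (Fin (q₁ + q₂ + q₃)),
        ((Equiv.Perm.sign σ : ℤ) : ℝ) * ((Equiv.Perm.sign τ : ℤ) : ℝ) *
            ((((Equiv.Perm.sign σ' : ℤ) : ℝ) * ((Equiv.Perm.sign τ' : ℤ) : ℝ) *
                A (fun a => I (σ (Fin.castAdd p₃ (σ' (Fin.castAdd p₂ a)))))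
                  (fun b => J (τ (Fin.castAdd q₃ (τ' (Fin.castAdd q₂ b)))))) *
              B (fun a => I (σ (Fin.castAdd p₃ (σ' (Fin.natAdd p₁ a)))))
                (fun b => J (τ (Fin.castAdd q₃ (τ' (Fin.natAdd q₁ b)))))) *
          C (fun a => I (σ (Fin.natAdd (p₁ + p₂) a))) (fun b => J (τ (Fin.natAdd (q₁ + q₂) b))))
      = ∑ ρ : Equiv.Perm (Fin (p₁ + p₂ + p₃)), ∑ π : Equiv.Perm (Fin (q₁ + q₂ + q₃)),
          ((Equiv.Perm.sign ρ : ℤ) : ℝ) * ((Equiv.Perm.sign π : ℤ) : ℝ) *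
            (A (fun a => I (ρ (Fin.castAdd p₃ (Fin.castAdd p₂ a))))
                (fun b => J (π (Fin.castAdd q₃ (Fin.castAdd q₂ b)))) *
              (B (fun a => I (ρ (Fin.castAdd p₃ (Fin.natAdd p₁ a))))
                  (fun b => J (π (Fin.castAdd q₃ (Fin.natAdd q₁ b)))) *
                C (fun a => I (ρ (Fin.natAdd (p₁ + p₂) a)))
                  (fun b => J (π (Fin.natAdd (q₁ + q₂) b))))) := by
    intro σ' τ'
    conv_rhs => rw [← sum_mul_right (emb (p₁ + p₂) p₃ σ') (emb (q₁ + q₂) q₃ τ')]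
    refine Finset.sum_congr rfl fun σ _ => Finset.sum_congr rfl fun τ _ => ?_
    beta_reduce
    have hs1 : ((Equiv.Perm.sign (σ * emb (p₁ + p₂) p₃ σ') : ℤ) : ℝ)
        = ((Equiv.Perm.sign σ : ℤ) : ℝ) * ((Equiv.Perm.sign σ' : ℤ) : ℝ) := by
      rw [map_mul, sign_emb]; push_cast; ring
    have hs2 : ((Equiv.Perm.sign (τ * emb (q₁ + q₂) q₃ τ') : ℤ) : ℝ)
        = ((Equiv.Perm.sign τ : ℤ) : ℝ) * ((Equiv.Perm.sign τ' : ℤ) : ℝ) := by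
      rw [map_mul, sign_emb]; push_cast; ring
    have eA : (fun a => I ((σ * emb (p₁ + p₂) p₃ σ') (Fin.castAdd p₃ (Fin.castAdd p₂ a))))
        = fun a => I (σ (Fin.castAdd p₃ (σ' (Fin.castAdd p₂ a)))) :=
      funext fun a => congrArg I (by rw [Equiv.Perm.mul_apply, emb_castAdd])
    have eB : (fun a => I ((σ * emb (p₁ + p₂) p₃ σ') (Fin.castAdd p₃ (Fin.natAdd p₁ a))))
        = fun a => I (σ (Fin.castAdd p₃ (σ' (Fin.natAdd p₁ a)))) :=
      funext fun a => congrArg I (by rw [Equiv.Perm.mul_apply, emb_castAdd])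
    have eC : (fun a => I ((σ * emb (p₁ + p₂) p₃ σ') (Fin.natAdd (p₁ + p₂) a)))
        = fun a => I (σ (Fin.natAdd (p₁ + p₂) a)) :=
      funext fun a => congrArg I (by rw [Equiv.Perm.mul_apply, emb_natAdd])
    have eA' : (fun b => J ((τ * emb (q₁ + q₂) q₃ τ') (Fin.castAdd q₃ (Fin.castAdd q₂ b))))
        = fun b => J (τ (Fin.castAdd q₃ (τ' (Fin.castAdd q₂ b)))) :=
      funext fun b => congrArg J (by rw [Equiv.Perm.mul_apply, emb_castAdd])
    have eB' : (fun b => J ((τ * emb (q₁ + q₂) q₃ τ') (Fin.castAdd q₃ (Fin.natAdd q₁ b))))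
        = fun b => J (τ (Fin.castAdd q₃ (τ' (Fin.natAdd q₁ b)))) :=
      funext fun b => congrArg J (by rw [Equiv.Perm.mul_apply, emb_castAdd])
    have eC' : (fun b => J ((τ * emb (q₁ + q₂) q₃ τ') (Fin.natAdd (q₁ + q₂) b)))
        = fun b => J (τ (Fin.natAdd (q₁ + q₂) b)) :=
      funext fun b => congrArg J (by rw [Equiv.Perm.mul_apply, emb_natAdd])
    rw [hs1, hs2, eA, eB, eC, eA', eB', eC']
    ring
  rw [Finset.sum_congr rfl fun σ' _ => Finset.sum_congr rfl fun τ' _ => inner σ' τ']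
  simp only [Finset.sum_const, Finset.card_univ, Fintype.card_perm, nsmul_eq_mul]
  have h1 : ((p₁ + p₂).factorial : ℝ) ≠ 0 := Nat.cast_ne_zero.mpr (Nat.factorial_ne_zero _)
  have h2 : ((q₁ + q₂).factorial : ℝ) ≠ 0 := Nat.cast_ne_zero.mpr (Nat.factorial_ne_zero _)
  have h3 : ∀ m : ℕ, ((m.factorial : ℝ)) ≠ 0 := fun m => Nat.cast_ne_zero.mpr (Nat.factorial_ne_zero _)
  field_simp
  simp only [Fintype.card_fin]
  push_cast
  ring

/-- The permutation of `Fin ((q+p)+p)` swapping the two last blocks of size `p`. -/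
private def blockSwap (q p : ℕ) : Equiv.Perm (Fin ((q + p) + p)) :=
  (((Equiv.sumCongr finSumFinEquiv (Equiv.refl (Fin p))).trans finSumFinEquiv)).permCongr
    ((Equiv.sumAssoc (Fin q) (Fin p) (Fin p)).trans
      (((Equiv.refl (Fin q)).sumCongr (Equiv.sumComm (Fin p) (Fin p))).trans
        (Equiv.sumAssoc (Fin q) (Fin p) (Fin p)).symm))

private lemma blockSwap_e1 (q p : ℕ) (a : Fin q) :
    blockSwap q p (Fin.castAdd p (Fin.castAdd p a)) = Fin.castAdd p (Fin.castAdd p a) := by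
  simp [blockSwap, Equiv.permCongr_apply]

private lemma blockSwap_e2 (q p : ℕ) (a : Fin p) :
    blockSwap q p (Fin.castAdd p (Fin.natAdd q a)) = Fin.natAdd (q + p) a := by
  simp [blockSwap, Equiv.permCongr_apply]

private lemma blockSwap_e3 (q p : ℕ) (a : Fin p) :
    blockSwap q p (Fin.natAdd (q + p) a) = Fin.castAdd p (Fin.natAdd q a) := by
  simp [blockSwap, Equiv.permCongr_apply]

private lemma blockSwap_sign_sq (q p : ℕ) :
    ((Equiv.Perm.sign (blockSwap q p) : ℤ) : ℝ) * ((Equiv.Perm.sign (blockSwap q p) : ℤ) : ℝ)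
      = 1 := by
  rw [← Int.cast_mul, ← Units.val_mul, Int.units_mul_self, Units.val_one, Int.cast_one]

private lemma scal (x y s a b c : ℝ) (h : s * s = 1) :
    x * y * (a * (b * c)) = x * s * (y * s) * (a * (c * b)) := by
  have h2 : x * s * (y * s) * (a * (c * b)) = s * s * (x * y * (a * (b * c))) := by ring
  rw [h2, h, one_mul]

set_option maxHeartbeats 1000000 in
private lemma mul_mul_swap {p q : ℕ} (A : DForm n q q) (B C : DForm n p p)
    (I J : Fin ((q + p) + p) → Fin n) :
    DForm.mul (DForm.mul A B) C I J = DForm.mul (DForm.mul A C) B I J := by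
  rw [mul_mul_expand, mul_mul_expand]
  have hfac : (q.factorial * p.factorial * p.factorial * q.factorial * p.factorial *
      p.factorial : ℕ) = (q.factorial * p.factorial * p.factorial * q.factorial *
      p.factorial * p.factorial : ℕ) := rfl
  congr 1
  conv_rhs => rw [← sum_mul_right (blockSwap q p) (blockSwap q p)]
  refine Finset.sum_congr rfl fun ρ _ => Finset.sum_congr rfl fun π _ => ?_
  beta_reduce
  have hs1 : ((Equiv.Perm.sign (ρ * blockSwap q p) : ℤ) : ℝ)
      = ((Equiv.Perm.sign ρ : ℤ) : ℝ) * ((Equiv.Perm.sign (blockSwap q p) : ℤ) : ℝ) := by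
    rw [map_mul]; push_cast; ring
  have hs2 : ((Equiv.Perm.sign (π * blockSwap q p) : ℤ) : ℝ)
      = ((Equiv.Perm.sign π : ℤ) : ℝ) * ((Equiv.Perm.sign (blockSwap q p) : ℤ) : ℝ) := by
    rw [map_mul]; push_cast; ring
  have e1 : ∀ (K : Fin ((q + p) + p) → Fin n) (ρ : Equiv.Perm (Fin ((q + p) + p))),
      (fun a => K ((ρ * blockSwap q p) (Fin.castAdd p (Fin.castAdd p a))))
        = fun a => K (ρ (Fin.castAdd p (Fin.castAdd p a))) := fun K ρ =>
    funext fun a => congrArg K (by rw [Equiv.Perm.mul_apply, blockSwap_e1])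
  have e2 : ∀ (K : Fin ((q + p) + p) → Fin n) (ρ : Equiv.Perm (Fin ((q + p) + p))),
      (fun a => K ((ρ * blockSwap q p) (Fin.castAdd p (Fin.natAdd q a))))
        = fun a => K (ρ (Fin.natAdd (q + p) a)) := fun K ρ =>
    funext fun a => congrArg K (by rw [Equiv.Perm.mul_apply, blockSwap_e2])
  have e3 : ∀ (K : Fin ((q + p) + p) → Fin n) (ρ : Equiv.Perm (Fin ((q + p) + p))),
      (fun a => K ((ρ * blockSwap q p) (Fin.natAdd (q + p) a)))
        = fun a => K (ρ (Fin.castAdd p (Fin.natAdd q a))) := fun K ρ =>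
    funext fun a => congrArg K (by rw [Equiv.Perm.mul_apply, blockSwap_e3])
  rw [hs1, hs2, e1 I, e1 J, e2 I, e2 J, e3 I, e3 J]
  exact scal _ _ _ _ _ _ (blockSwap_sign_sq q p)

private lemma mul_left_smul {p q r s : ℕ} (c : ℝ) (A : DForm n p q) (B : DForm n r s)
    (I : Fin (p + r) → Fin n) (J : Fin (q + s) → Fin n) :
    DForm.mul (fun I' J' => c * A I' J') B I J = c * DForm.mul A B I J := by
  simp only [DForm.mul]
  conv_rhs => rw [mul_left_comm]
  congr 1
  rw [Finset.mul_sum]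
  refine Finset.sum_congr rfl fun σ _ => ?_
  rw [Finset.mul_sum]
  exact Finset.sum_congr rfl fun τ _ => by ring

private lemma mul_zero_left {p q r s : ℕ} {A : DForm n p q} (hA : ∀ I J, A I J = 0)
    (B : DForm n r s) (I : Fin (p + r) → Fin n) (J : Fin (q + s) → Fin n) :
    DForm.mul A B I J = 0 := by
  have hA' : A = fun _ _ => (0 : ℝ) := funext fun I' => funext fun J' => hA I' J'
  rw [hA']
  simp [DForm.mul]

end Aux
/-- `F_h(ω^k) = k·ω^{k-1}·F_h(ω)` for any symmetric `(p,p)`-double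
form `ω` and any positive integer `k` (written here as `k+1`). -/
theorem Fh_pow {n p : ℕ} (h : Fin n → Fin n → ℝ)
    (hsymm : ∀ i j, h i j = h j i)
    (ω : DForm n p p) (hω : DForm.IsAlt ω) (hωs : DForm.IsSym ω) (k : ℕ) :
    ∀ I J, DForm.Fh h (DForm.pow ω (k + 1)) I J =
      ((k : ℝ) + 1) * DForm.mul (DForm.pow ω k) (DForm.Fh h ω) I J := by
  induction k with
  | zero =>
    intro I J
    have hz : ∀ (I' J' : Fin (p * 0) → Fin n), DForm.Fh h (DForm.pow ω 0) I' J' = 0 := by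
      intro I' J'
      show (∑ m : Fin (p * 0), ∑ i : Fin n, _) + (∑ m : Fin (p * 0), ∑ i : Fin n, _) = 0
      rw [Finset.sum_eq_zero fun m _ => absurd m.isLt (by omega),
        Finset.sum_eq_zero fun m _ => absurd m.isLt (by omega), add_zero]
    calc DForm.Fh h (DForm.pow ω (0 + 1)) I J
        = DForm.Fh h (DForm.mul (DForm.pow ω 0) ω) I J := rfl
      _ = DForm.mul (DForm.Fh h (DForm.pow ω 0)) ω I J
            + DForm.mul (DForm.pow ω 0) (DForm.Fh h ω) I J := Fh_mul h _ ω I J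
      _ = DForm.mul (DForm.pow ω 0) (DForm.Fh h ω) I J := by
            rw [mul_zero_left hz, zero_add]
      _ = ((0 : ℕ) + 1 : ℝ) * DForm.mul (DForm.pow ω 0) (DForm.Fh h ω) I J := by
            norm_num
  | succ k ih =>
    intro I J
    have hIH : DForm.Fh h (DForm.pow ω (k + 1))
        = fun I' J' => ((k : ℝ) + 1) * DForm.mul (DForm.pow ω k) (DForm.Fh h ω) I' J' :=
      funext fun I' => funext fun J' => ih I' J'
    calc DForm.Fh h (DForm.pow ω (k + 1 + 1)) I J
        = DForm.Fh h (DForm.mul (DForm.pow ω (k + 1)) ω) I J := rfl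
      _ = DForm.mul (DForm.Fh h (DForm.pow ω (k + 1))) ω I J
            + DForm.mul (DForm.pow ω (k + 1)) (DForm.Fh h ω) I J := Fh_mul h _ ω I J
      _ = DForm.mul (fun I' J' => ((k : ℝ) + 1) *
              DForm.mul (DForm.pow ω k) (DForm.Fh h ω) I' J') ω I J
            + DForm.mul (DForm.pow ω (k + 1)) (DForm.Fh h ω) I J := by rw [hIH]
      _ = ((k : ℝ) + 1) * DForm.mul (DForm.mul (DForm.pow ω k) (DForm.Fh h ω)) ω I J
            + DForm.mul (DForm.pow ω (k + 1)) (DForm.Fh h ω) I J := by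
            rw [mul_left_smul]
      _ = ((k : ℝ) + 1) * DForm.mul (DForm.mul (DForm.pow ω k) ω) (DForm.Fh h ω) I J
            + DForm.mul (DForm.pow ω (k + 1)) (DForm.Fh h ω) I J := by
            rw [mul_mul_swap]
      _ = ((k : ℝ) + 1) * DForm.mul (DForm.pow ω (k + 1)) (DForm.Fh h ω) I J
            + DForm.mul (DForm.pow ω (k + 1)) (DForm.Fh h ω) I J := rfl
      _ = (((k + 1 : ℕ) : ℝ) + 1) * DForm.mul (DForm.pow ω (k + 1)) (DForm.Fh h ω) I J := by
            push_cast; ring
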